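/- arXiv:1707.07318 — 2 statements merged into one kernel-verified Lean document; each statement's English description precedes it below -/
import Mathlib

section
/- Recursive generation of triples for P₁: for all natural numbers p, q with 1 ≤ p, 1 ≤ q, p ≠ q, if ω₁(p, q) = 1 and r = p ^^^ q, then ω₁(2r, 2q) = 1, ω₁(2r+1, 2q+1) = 1, ω₁(2r+1, 2q) = 1 and ω₁(2r, 2q+1) = 1; that is, the triple (p,q,r) generates the triples (2r,2q,2p), (2r+1,2q+1,2p), (2r+1,2q,2p+1) and (2r,2q+1,2p+1). -/
def omega1 (p q : ℕ) : ℤ :=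
  if p = 0 ∧ q = 0 then 1
  else if p % 2 = 0 then
    if q % 2 = 0 then omega1 (q / 2) (p / 2)
    else if 0 < p / 2 then -omega1 (p / 2) (q / 2) else 1
  else
    if q % 2 = 0 then omega1 (q / 2) (p / 2)
    else if 0 < p / 2 then omega1 (q / 2) (p / 2) else -1
termination_by p + q
decreasing_by all_goals omega

lemma oee (a b : ℕ) (h : ¬(a = 0 ∧ b = 0)) : omega1 (2*a) (2*b) = omega1 b a := by
  rw [omega1]
  have h1 : ¬(2*a = 0 ∧ 2*b = 0) := by omega
  simp [h1, Nat.mul_div_cancel_left, Nat.mul_mod_right]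
  exact fun h1 h2 => absurd ⟨h1, h2⟩ h
lemma oeo (a b : ℕ) (ha : 0 < a) : omega1 (2*a) (2*b+1) = -omega1 a b := by
  rw [omega1]
  have h1 : ¬(2*a = 0 ∧ 2*b+1 = 0) := by omega
  have h2 : (2*b+1) % 2 = 1 := by omega
  have h3 : (2*b+1) / 2 = b := by omega
  simp [h1, h2, h3, Nat.mul_div_cancel_left, Nat.mul_mod_right, ha]
lemma ooe (a b : ℕ) : omega1 (2*a+1) (2*b) = omega1 b a := by
  rw [omega1]
  have h2 : (2*a+1) % 2 = 1 := by omega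
  have h3 : (2*a+1) / 2 = a := by omega
  simp [h2, h3, Nat.mul_div_cancel_left, Nat.mul_mod_right]
lemma ooo (a b : ℕ) (ha : 0 < a) : omega1 (2*a+1) (2*b+1) = omega1 b a := by
  rw [omega1]
  have h2 : (2*a+1) % 2 = 1 := by omega
  have h3 : (2*a+1) / 2 = a := by omega
  have h4 : (2*b+1) % 2 = 1 := by omega
  have h5 : (2*b+1) / 2 = b := by omega
  simp [h2, h3, h4, h5, ha]
lemma ooo0 (b : ℕ) : omega1 1 (2*b+1) = -1 := by
  rw [omega1]; norm_num
lemma oeo0 (b : ℕ) : omega1 0 (2*b+1) = 1 := by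
  rw [omega1]; norm_num

lemma xee (a b : ℕ) : (2*a) ^^^ (2*b) = 2*(a^^^b) := by
  simpa [Nat.bit, two_mul] using Nat.xor_bit false a false b
lemma xoe (a b : ℕ) : (2*a+1) ^^^ (2*b) = 2*(a^^^b)+1 := by
  simpa [Nat.bit, two_mul] using Nat.xor_bit true a false b
lemma xeo (a b : ℕ) : (2*a) ^^^ (2*b+1) = 2*(a^^^b)+1 := by
  simpa [Nat.bit, two_mul] using Nat.xor_bit false a true b
lemma xoo (a b : ℕ) : (2*a+1) ^^^ (2*b+1) = 2*(a^^^b) := by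
  simpa [Nat.bit, two_mul] using Nat.xor_bit true a true b

lemma xle : ∀ n a b : ℕ, a + b = n → a ^^^ b ≤ a + b := by
  intro n
  induction n using Nat.strong_induction_on with
  | _ n ih =>
    intro a b hn
    rcases Nat.eq_zero_or_pos n with h0 | h0
    · have : a = 0 := by omega
      subst this
      simp [Nat.zero_xor]
    obtain ⟨a', ha | ha⟩ := Nat.even_or_odd' a <;>
      obtain ⟨b', hb | hb⟩ := Nat.even_or_odd' b <;> subst ha hb
    · rw [xee]
      have := ih (a' + b') (by omega) a' b' rfl
      omega
    · rw [xeo]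
      have := ih (a' + b') (by omega) a' b' rfl
      omega
    · rw [xoe]
      have := ih (a' + b') (by omega) a' b' rfl
      omega
    · rw [xoo]
      have := ih (a' + b') (by omega) a' b' rfl
      omega

lemma xpos {a b : ℕ} (h : a ≠ b) : 1 ≤ a ^^^ b := by
  rcases Nat.eq_zero_or_pos (a ^^^ b) with h0 | h0
  · exact absurd (xor_eq_zero_iff.mp h0) h
  · exact h0

lemma xne {a b : ℕ} (h : a ≠ 0) : a ^^^ b ≠ b := by
  intro hc
  apply h
  have := congrArg (· ^^^ b) hc
  simpa [xor_cancel_right] using this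

lemma oZ : ∀ n, omega1 n 0 = 1 ∧ omega1 0 n = 1 := by
  intro n
  induction n using Nat.strong_induction_on with
  | _ n ih =>
    match n with
    | 0 => constructor <;> (rw [omega1]; norm_num)
    | (m+1) =>
      obtain ⟨k, hk | hk⟩ := Nat.even_or_odd' (m+1)
      · have hk1 : k < m + 1 := by omega
        rw [hk]
        constructor
        · have := oee k 0 (by omega)
          simpa using this.trans (ih k hk1).2
        · have := oee 0 k (by omega)
          simpa using this.trans (ih k hk1).1
      · rw [hk]
        constructor
        · have hk1 : k < m + 1 := by omega
          have := ooe k 0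
          simpa using this.trans (ih k hk1).2
        · exact oeo0 k

lemma oD : ∀ n, 1 ≤ n → omega1 n n = -1 := by
  intro n
  induction n using Nat.strong_induction_on with
  | _ n ih =>
    intro hn
    obtain ⟨k, hk | hk⟩ := Nat.even_or_odd' n
    · have hk0 : 1 ≤ k := by omega
      rw [hk, oee k k (by omega)]
      exact ih k (by omega) hk0
    · rcases Nat.eq_zero_or_pos k with h0 | h0
      · rw [hk, h0]; simpa using ooo0 0
      · rw [hk, ooo k k h0]
        exact ih k (by omega) h0

lemma oAC : ∀ n p q, p + q = n → 1 ≤ p → 1 ≤ q → p ≠ q →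
    (omega1 q p = -omega1 p q ∧ omega1 q (p ^^^ q) = omega1 p q) := by
  intro n
  induction n using Nat.strong_induction_on with
  | _ n ih =>
    intro p q hn hp hq hpq
    obtain ⟨a, ha | ha⟩ := Nat.even_or_odd' p <;>
      obtain ⟨b, hb | hb⟩ := Nat.even_or_odd' q <;> subst ha hb
    · -- p = 2a, q = 2b : a,b ≥ 1, a ≠ b
      have ha1 : 1 ≤ a := by omega
      have hb1 : 1 ≤ b := by omega
      have hab : a ≠ b := by omega
      have iA := (ih (a+b) (by omega) a b rfl ha1 hb1 hab).1
      have iC := (ih (a+b) (by omega) a b rfl ha1 hb1 hab).2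
      have hxle := xle (a+b) a b rfl
      have iA2 := (ih ((a^^^b)+b) (by omega) (a^^^b) b rfl (xpos hab) hb1
        (xne (by omega))).1
      refine ⟨?_, ?_⟩
      · rw [oee a b (by omega), oee b a (by omega), iA]; ring
      · rw [xee, oee b (a^^^b) (by omega), oee a b (by omega)]
        linarith [iA2, iC, iA]
    · -- p = 2a (a ≥ 1), q = 2b+1
      have ha1 : 1 ≤ a := by omega
      refine ⟨?_, ?_⟩
      · rw [oeo a b ha1, ooe b a]; ring
      · rw [xeo, oeo a b ha1]
        rcases Nat.eq_zero_or_pos b with hb0 | hb0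
        · subst hb0
          rw [show a ^^^ 0 = a from Nat.xor_zero a]
          rw [show (2*0+1 : ℕ) = 1 by norm_num, ooo0 a, (oZ a).1]
        · rw [ooo b (a^^^b) hb0]
          rcases eq_or_ne a b with hab | hab
          · subst hab
            rw [Nat.xor_self, (oZ a).2, oD a ha1]
            norm_num
          · have hxle := xle (a+b) a b rfl
            have iA2 := (ih ((a^^^b)+b) (by omega) (a^^^b) b rfl (xpos hab) hb0
              (xne (by omega))).1
            have iC := (ih (a+b) (by omega) a b rfl ha1 hb0 hab).2
            linarith [iA2, iC]
    · -- p = 2a+1, q = 2b (b ≥ 1)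
      have hb1 : 1 ≤ b := by omega
      refine ⟨?_, ?_⟩
      · rw [oeo b a hb1, ooe a b]
      · rw [xoe, ooe a b, oeo b (a^^^b) hb1]
        rcases Nat.eq_zero_or_pos a with ha0 | ha0
        · subst ha0
          rw [Nat.zero_xor, oD b hb1, (oZ b).1]
          norm_num
        · rcases eq_or_ne a b with hab | hab
          · subst hab
            rw [Nat.xor_self, (oZ a).1, oD a ha0]
          · have iA := (ih (a+b) (by omega) a b rfl ha0 hb1 hab).1
            have iC := (ih (a+b) (by omega) a b rfl ha0 hb1 hab).2
            rw [iC, iA]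
    · -- p = 2a+1, q = 2b+1 : a ≠ b
      have hab : a ≠ b := by omega
      rcases Nat.eq_zero_or_pos a with ha0 | ha0
      · subst ha0
        have hb1 : 1 ≤ b := by omega
        refine ⟨?_, ?_⟩
        · rw [ooo b 0 hb1, (oZ b).2, show (2*0+1 : ℕ) = 1 by norm_num, ooo0 b]
          norm_num
        · rw [xoo, Nat.zero_xor, ooe b b, oD b hb1,
            show (2*0+1 : ℕ) = 1 by norm_num, ooo0 b]
      rcases Nat.eq_zero_or_pos b with hb0 | hb0
      · subst hb0
        refine ⟨?_, ?_⟩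
        · rw [show (2*0+1 : ℕ) = 1 by norm_num, ooo0 a, ooo a 0 ha0, (oZ a).2]
        · rw [xoo, Nat.xor_zero, show (2*0+1 : ℕ) = 1 by norm_num, ooe 0 a,
            ooo a 0 ha0, (oZ a).1, (oZ a).2]
      · have iA := (ih (a+b) (by omega) a b rfl ha0 hb0 hab).1
        have iC := (ih (a+b) (by omega) a b rfl ha0 hb0 hab).2
        have hxle := xle (a+b) a b rfl
        have iA2 := (ih ((a^^^b)+b) (by omega) (a^^^b) b rfl (xpos hab) hb0
          (xne (by omega))).1
        refine ⟨?_, ?_⟩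
        · rw [ooo b a hb0, ooo a b ha0, iA]; ring
        · rw [xoo, ooe b (a^^^b), ooo a b ha0]
          linarith [iA2, iC, iA]

/-- Recursive generation of structure-constant triples for the doubling product P1. -/
theorem omega1_triple_generation (p q r : ℕ) (hp : 1 ≤ p) (hq : 1 ≤ q) (hpq : p ≠ q)
    (h : omega1 p q = 1) (hr : r = p ^^^ q) :
    omega1 (2 * r) (2 * q) = 1 ∧
    omega1 (2 * r + 1) (2 * q + 1) = 1 ∧
    omega1 (2 * r + 1) (2 * q) = 1 ∧
    omega1 (2 * r) (2 * q + 1) = 1 := by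
  have hr1 : 1 ≤ r := hr ▸ xpos hpq
  have hC : omega1 q r = 1 := by rw [hr, (oAC (p+q) p q rfl hp hq hpq).2, h]
  have hrq : r ≠ q := by
    rw [hr]; exact xne (by omega)
  have hA : omega1 q r = -omega1 r q := (oAC (r+q) r q rfl hr1 hq hrq).1
  have hrq1 : omega1 r q = -1 := by
    have : (1 : ℤ) = -omega1 r q := hC ▸ hA
    omega
  refine ⟨?_, ?_, ?_, ?_⟩
  · rw [oee r q (by omega), hC]
  · rw [ooo r q hr1, hC]
  · rw [ooe r q, hC]
  · rw [oeo r q hr1, hrq1]; ring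
end

section
/- Recursive generation of triples for P₃: for all natural numbers p, q with 1 ≤ p, 1 ≤ q, p ≠ q, if ω₃(p, q) = 1 and r = p ^^^ q, then ω₃(2p, 2q) = 1, ω₃(2r+1, 2q+1) = 1, ω₃(2r+1, 2q) = 1 and ω₃(2r, 2q+1) = 1; that is, the triple (p,q,r) generates the triples (2p,2q,2r), (2r+1,2q+1,2p), (2r+1,2q,2p+1) and (2r,2q+1,2p+1). -/
/-- Twist of the Cayley–Dickson doubling product `P₃ : (a,b)(c,d) = (ac − db*, a*d + cb)`. -/
def omega3 (p q : ℕ) : ℤ :=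
  if p = 0 ∧ q = 0 then 1
  else if p % 2 = 0 then
    if q % 2 = 0 then omega3 (p / 2) (q / 2)
    else if 0 < p / 2 then -omega3 (p / 2) (q / 2) else 1
  else
    if q % 2 = 0 then omega3 (q / 2) (p / 2)
    else if 0 < p / 2 then omega3 (q / 2) (p / 2) else -1
termination_by p + q
decreasing_by all_goals omega

lemma xor_ee (a b : ℕ) : (2*a) ^^^ (2*b) = 2*(a ^^^ b) := by
  have := Nat.xor_bit false a false b
  simpa [Nat.bit] using this

lemma xor_eo (a b : ℕ) : (2*a) ^^^ (2*b+1) = 2*(a ^^^ b)+1 := by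
  have := Nat.xor_bit false a true b
  simpa [Nat.bit] using this

lemma xor_oe (a b : ℕ) : (2*a+1) ^^^ (2*b) = 2*(a ^^^ b)+1 := by
  have := Nat.xor_bit true a false b
  simpa [Nat.bit] using this

lemma xor_oo (a b : ℕ) : (2*a+1) ^^^ (2*b+1) = 2*(a ^^^ b) := by
  have := Nat.xor_bit true a true b
  simpa [Nat.bit] using this

lemma omega3_ee (a b : ℕ) (h : ¬(a = 0 ∧ b = 0)) :
    omega3 (2*a) (2*b) = omega3 a b := by
  rw [omega3, if_neg (by omega : ¬(2*a = 0 ∧ 2*b = 0))]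
  have h1 : (2*a) % 2 = 0 := by omega
  have h2 : (2*b) % 2 = 0 := by omega
  have h3 : (2*a) / 2 = a := by omega
  have h4 : (2*b) / 2 = b := by omega
  simp [h1, h2, h3, h4]

lemma omega3_eo (a b : ℕ) (ha : 0 < a) :
    omega3 (2*a) (2*b+1) = -omega3 a b := by
  rw [omega3, if_neg (by omega : ¬(2*a = 0 ∧ 2*b+1 = 0))]
  have h1 : (2*a) % 2 = 0 := by omega
  have h2 : (2*b+1) % 2 = 1 := by omega
  have h3 : (2*a) / 2 = a := by omega
  have h4 : (2*b+1) / 2 = b := by omega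
  simp [h1, h2, h3, h4, ha]

lemma omega3_oe (a b : ℕ) :
    omega3 (2*a+1) (2*b) = omega3 b a := by
  rw [omega3, if_neg (by omega : ¬(2*a+1 = 0 ∧ 2*b = 0))]
  have h1 : (2*a+1) % 2 = 1 := by omega
  have h2 : (2*b) % 2 = 0 := by omega
  have h3 : (2*a+1) / 2 = a := by omega
  have h4 : (2*b) / 2 = b := by omega
  simp [h1, h2, h3, h4]

lemma omega3_oo (a b : ℕ) (ha : 0 < a) :
    omega3 (2*a+1) (2*b+1) = omega3 b a := by
  rw [omega3, if_neg (by omega : ¬(2*a+1 = 0 ∧ 2*b+1 = 0))]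
  have h1 : (2*a+1) % 2 = 1 := by omega
  have h2 : (2*b+1) % 2 = 1 := by omega
  have h3 : (2*a+1) / 2 = a := by omega
  have h4 : (2*b+1) / 2 = b := by omega
  simp [h1, h2, h3, h4, ha]

lemma omega3_one_odd (b : ℕ) : omega3 1 (2*b+1) = -1 := by
  rw [omega3, if_neg (by omega : ¬(1 = 0 ∧ 2*b+1 = 0))]
  have h1 : (1:ℕ) % 2 = 1 := rfl
  have h2 : (2*b+1) % 2 = 1 := by omega
  have h3 : (1:ℕ) / 2 = 0 := rfl
  simp [h1, h2, h3]

lemma omega3_zero_left (n : ℕ) : omega3 0 n = 1 := by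
  induction n using Nat.strong_induction_on with
  | _ n ih =>
    rcases Nat.eq_zero_or_pos n with h | h
    · rw [h, omega3]; simp
    · rw [omega3, if_neg (by omega : ¬((0:ℕ) = 0 ∧ n = 0))]
      have h0 : (0:ℕ) % 2 = 0 := rfl
      have h00 : (0:ℕ) / 2 = 0 := rfl
      rcases Nat.even_or_odd n with he | ho
      · have h2 : n % 2 = 0 := Nat.even_iff.mp he
        have hd : n / 2 < n := by omega
        simp [h0, h2, h00, ih _ hd]
      · have h2 : n % 2 = 1 := Nat.odd_iff.mp ho
        simp [h0, h2, h00]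

lemma omega3_zero_right (n : ℕ) : omega3 n 0 = 1 := by
  induction n using Nat.strong_induction_on with
  | _ n ih =>
    rcases Nat.eq_zero_or_pos n with h | h
    · rw [h, omega3]; simp
    · rw [omega3, if_neg (by omega : ¬(n = 0 ∧ (0:ℕ) = 0))]
      have h0 : (0:ℕ) % 2 = 0 := rfl
      have h00 : (0:ℕ) / 2 = 0 := rfl
      rcases Nat.even_or_odd n with he | ho
      · have h2 : n % 2 = 0 := Nat.even_iff.mp he
        have hd : n / 2 < n := by omega
        simp [h0, h2, h00, ih _ hd]
      · have h2 : n % 2 = 1 := Nat.odd_iff.mp ho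
        simp [h0, h2, h00, omega3_zero_left]

lemma omega3_self (n : ℕ) (hn : 1 ≤ n) : omega3 n n = -1 := by
  induction n using Nat.strong_induction_on with
  | _ n ih =>
    rcases Nat.even_or_odd n with he | ho
    · obtain ⟨k, hk⟩ := he
      have hk' : n = 2*k := by omega
      have hkpos : 1 ≤ k := by omega
      rw [hk', omega3_ee k k (by omega)]
      exact ih k (by omega) hkpos
    · obtain ⟨k, hk⟩ := ho
      rw [hk]
      rcases Nat.eq_zero_or_pos k with h0 | h0
      · rw [h0]; simpa using omega3_one_odd 0
      · rw [omega3_oo k k h0]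
        exact ih k (by omega) h0

lemma omega3_antisym (a b : ℕ) (ha : 1 ≤ a) (hb : 1 ≤ b) (hab : a ≠ b) :
    omega3 b a = -omega3 a b := by
  suffices H : ∀ n, ∀ a b : ℕ, 1 ≤ a → 1 ≤ b → a ≠ b → a + b = n →
      omega3 b a = -omega3 a b from H (a+b) a b ha hb hab rfl
  clear ha hb hab a b
  intro n
  induction n using Nat.strong_induction_on with
  | _ n ih =>
  intro a b ha hb hab hn
  subst hn
  rcases Nat.even_or_odd a with hea | hoa <;> rcases Nat.even_or_odd b with heb | hob
  · -- both even
    obtain ⟨a', ha'⟩ := hea; obtain ⟨b', hb'⟩ := heb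
    have ha2 : a = 2*a' := by omega
    have hb2 : b = 2*b' := by omega
    subst ha2; subst hb2
    rw [omega3_ee a' b' (by omega), omega3_ee b' a' (by omega)]
    exact ih (a' + b') (by omega) a' b' (by omega) (by omega) (by omega) rfl
  · -- a even, b odd
    obtain ⟨a', ha'⟩ := hea; obtain ⟨b', hb'⟩ := hob
    have ha2 : a = 2*a' := by omega
    subst ha2; subst hb'
    rw [omega3_eo a' b' (by omega), omega3_oe b' a']
    ring
  · -- a odd, b even
    obtain ⟨a', ha'⟩ := hoa; obtain ⟨b', hb'⟩ := heb
    have hb2 : b = 2*b' := by omega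
    subst hb2; subst ha'
    rw [omega3_oe a' b', omega3_eo b' a' (by omega)]
  · -- both odd
    obtain ⟨a', ha'⟩ := hoa; obtain ⟨b', hb'⟩ := hob
    subst ha'; subst hb'
    rcases Nat.eq_zero_or_pos a' with h0 | h0
    · subst h0
      have hb0 : 1 ≤ b' := by omega
      have h1 : omega3 (2*0+1) (2*b'+1) = -1 := omega3_one_odd b'
      rw [h1, omega3_oo b' 0 hb0, omega3_zero_left]
      norm_num
    · rcases Nat.eq_zero_or_pos b' with h1 | h1
      · subst h1
        have h1 : omega3 (2*0+1) (2*a'+1) = -1 := omega3_one_odd a'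
        rw [h1, omega3_oo a' 0 h0, omega3_zero_left]
      · rw [omega3_oo a' b' h0, omega3_oo b' a' h1]
        exact ih (a' + b') (by omega) b' a' h1 h0 (by omega) (by omega)

lemma xor_pos (a b : ℕ) (h : a ≠ b) : 1 ≤ a ^^^ b := by
  rcases Nat.eq_zero_or_pos (a ^^^ b) with hz | hz
  · exact absurd (xor_eq_zero_iff.mp hz) h
  · exact hz

lemma xor_ne_right (a b : ℕ) (h : a ≠ 0) : a ^^^ b ≠ b := by
  intro hc
  apply h
  have : a ^^^ b = 0 ^^^ b := by simpa using hc
  exact Nat.xor_left_inj.mp this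

lemma omega3_cyc (a b : ℕ) (ha : 1 ≤ a) (hb : 1 ≤ b) (hab : a ≠ b) :
    omega3 b (a ^^^ b) = omega3 a b := by
  suffices H : ∀ n, ∀ a b : ℕ, 1 ≤ a → 1 ≤ b → a ≠ b → a + b = n →
      omega3 b (a ^^^ b) = omega3 a b from H (a+b) a b ha hb hab rfl
  clear ha hb hab a b
  intro n
  induction n using Nat.strong_induction_on with
  | _ n ih =>
  intro a b ha hb hab hn
  subst hn
  rcases Nat.even_or_odd a with hea | hoa <;> rcases Nat.even_or_odd b with heb | hob
  · -- both even
    obtain ⟨a', ha'⟩ := hea; obtain ⟨b', hb'⟩ := heb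
    have ha2 : a = 2*a' := by omega
    have hb2 : b = 2*b' := by omega
    subst ha2; subst hb2
    rw [xor_ee, omega3_ee b' (a' ^^^ b') (by omega), omega3_ee a' b' (by omega)]
    exact ih (a' + b') (by omega) a' b' (by omega) (by omega) (by omega) rfl
  · -- a even, b odd
    obtain ⟨a', ha'⟩ := hea; obtain ⟨b', hb'⟩ := hob
    have ha2 : a = 2*a' := by omega
    subst ha2; subst hb'
    have ha0 : 0 < a' := by omega
    rw [xor_eo, omega3_eo a' b' ha0]
    rcases Nat.eq_zero_or_pos b' with h0 | h0
    · subst h0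
      have h1 : omega3 (2*0+1) (2*(a' ^^^ 0)+1) = -1 := by
        rw [Nat.xor_zero]; exact omega3_one_odd a'
      rw [h1, omega3_zero_right]
    · rw [omega3_oo b' (a' ^^^ b') h0]
      rcases eq_or_ne a' b' with he | hne
      · subst he
        rw [Nat.xor_self, omega3_zero_left, omega3_self a' ha0]
        norm_num
      · rw [omega3_antisym b' (a' ^^^ b') h0 (xor_pos a' b' hne)
           (Ne.symm (xor_ne_right a' b' (by omega))),
          ih (a' + b') (by omega) a' b' ha0 h0 hne rfl]
  · -- a odd, b even
    obtain ⟨a', ha'⟩ := hoa; obtain ⟨b', hb'⟩ := heb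
    have hb2 : b = 2*b' := by omega
    subst hb2; subst ha'
    have hb0 : 0 < b' := by omega
    rw [xor_oe, omega3_eo b' (a' ^^^ b') hb0, omega3_oe a' b']
    rcases Nat.eq_zero_or_pos a' with h0 | h0
    · subst h0
      rw [Nat.zero_xor, omega3_self b' hb0, omega3_zero_right]
      norm_num
    · rcases eq_or_ne a' b' with he | hne
      · subst he
        rw [Nat.xor_self, omega3_zero_right, omega3_self a' h0]
      · rw [ih (a' + b') (by omega) a' b' h0 hb0 hne rfl,
          omega3_antisym a' b' h0 hb0 hne]
  · -- both odd
    obtain ⟨a', ha'⟩ := hoa; obtain ⟨b', hb'⟩ := hob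
    subst ha'; subst hb'
    have hne : a' ≠ b' := by omega
    rw [xor_oo, omega3_oe b' (a' ^^^ b')]
    rcases Nat.eq_zero_or_pos a' with h0 | h0
    · subst h0
      have hb0 : 0 < b' := by omega
      have h1 : omega3 (2*0+1) (2*b'+1) = -1 := omega3_one_odd b'
      rw [Nat.zero_xor, omega3_self b' hb0, h1]
    · rw [omega3_oo a' b' h0]
      rcases Nat.eq_zero_or_pos b' with h1 | h1
      · subst h1
        rw [Nat.xor_zero, omega3_zero_right, omega3_zero_left]
      · rw [omega3_antisym b' (a' ^^^ b') h1 (xor_pos a' b' hne)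
           (Ne.symm (xor_ne_right a' b' (by omega))),
          ih (a' + b') (by omega) a' b' h0 h1 hne rfl,
          omega3_antisym a' b' h0 h1 hne]

/-- Recursive generation of structure-constant triples for the doubling product P3. -/
theorem omega3_triple_generation (p q r : ℕ) (hp : 1 ≤ p) (hq : 1 ≤ q) (hpq : p ≠ q)
    (h : omega3 p q = 1) (hr : r = p ^^^ q) :
    omega3 (2 * p) (2 * q) = 1 ∧
    omega3 (2 * r + 1) (2 * q + 1) = 1 ∧
    omega3 (2 * r + 1) (2 * q) = 1 ∧
    omega3 (2 * r) (2 * q + 1) = 1 := by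
  subst hr
  have hrpos : 1 ≤ p ^^^ q := xor_pos p q hpq
  have hrq : p ^^^ q ≠ q := xor_ne_right p q (by omega)
  have hcyc : omega3 q (p ^^^ q) = 1 := by rw [omega3_cyc p q hp hq hpq, h]
  refine ⟨?_, ?_, ?_, ?_⟩
  · rw [omega3_ee p q (by omega), h]
  · rw [omega3_oo (p ^^^ q) q hrpos, hcyc]
  · rw [omega3_oe (p ^^^ q) q, hcyc]
  · rw [omega3_eo (p ^^^ q) q hrpos,
      omega3_antisym q (p ^^^ q) hq hrpos (Ne.symm hrq), hcyc]
    norm_num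
end
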